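/- (Termination of the rank-reduction process.) Define a step on integer-valued lists as follows: given a list L of integers with at least two strictly negative entries, let a be the maximum of the negative entries of L; replace every negative entry x of L by x − a, leave the other entries unchanged, and append a to the list. Then for any list L₀ of integers with at least one strictly negative entry, any sequence of such steps starting from L₀ terminates after at most m(L₀) steps in a list with exactly one strictly negative entry, where m(L) denotes the sum of the absolute values of the negative entries of L. Moreover every list in the sequence has at least one negative entry. -/
import Mathlib

/-- Number of strictly negative entries of a list of integers. -/
def negCount (L : List ℤ) : ℕ := (L.filter (fun x => x < 0)).length

/-- Puncturing multiplicity: the sum of the absolute values of the negative entries. -/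
def pmult (L : List ℤ) : ℤ := ((L.filter (fun x => x < 0)).map (fun x => -x)).sum

/-- One step of the rank-reduction process: `L` has at least two strictly negative
entries, `a` is the maximum of the negative entries of `L`, every negative entry `x`
is replaced by `x − a`, the other entries are unchanged, and `a` is appended. -/
def RankStep (L L' : List ℤ) : Prop :=
  ∃ a : ℤ, 2 ≤ negCount L ∧ a ∈ L ∧ a < 0 ∧ (∀ x ∈ L, x < 0 → x ≤ a) ∧
    L' = L.map (fun x => if x < 0 then x - a else x) ++ [a]

lemma negCount_cons (x : ℤ) (L : List ℤ) :
    negCount (x :: L) = (if x < 0 then 1 else 0) + negCount L := by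
  simp [negCount, List.filter_cons]
  split <;> simp [Nat.add_comm]

lemma pmult_cons (x : ℤ) (L : List ℤ) :
    pmult (x :: L) = (if x < 0 then -x else 0) + pmult L := by
  simp [pmult, List.filter_cons]
  split <;> simp

lemma negCount_append (A B : List ℤ) : negCount (A ++ B) = negCount A + negCount B := by
  simp [negCount, List.filter_append]

lemma pmult_append (A B : List ℤ) : pmult (A ++ B) = pmult A + pmult B := by
  simp [pmult, List.filter_append]

lemma pmult_ge (L : List ℤ) : (negCount L : ℤ) ≤ pmult L := by
  induction L with
  | nil => simp [negCount, pmult]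
  | cons x L ih =>
    rw [negCount_cons, pmult_cons]
    split <;> push_cast <;> omega

lemma pmult_map (a : ℤ) (ha : a < 0) (L : List ℤ) (h : ∀ x ∈ L, x < 0 → x ≤ a) :
    pmult (L.map (fun x => if x < 0 then x - a else x)) = pmult L + a * negCount L := by
  induction L with
  | nil => simp [negCount, pmult]
  | cons x L ih =>
    have hx := h x (by simp)
    have ih' := ih (fun y hy => h y (by simp [hy]))
    rw [List.map_cons, pmult_cons, pmult_cons, negCount_cons]
    by_cases hx0 : x < 0
    · have hxa := hx hx0
      simp only [if_pos hx0]
      by_cases h2 : x - a < 0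
      · rw [if_pos h2, ih']; push_cast; ring
      · have : x = a := by omega
        rw [if_neg h2, ih']; push_cast; subst this; ring
    · simp only [if_neg hx0, ih']; push_cast; ring

lemma step_pmult {L L' : List ℤ} (h : RankStep L L') : pmult L' + 1 ≤ pmult L := by
  obtain ⟨a, h2, _, ha, hmax, rfl⟩ := h
  rw [pmult_append, pmult_map a ha L hmax, pmult_cons]
  have h1 : pmult ([] : List ℤ) = 0 := by simp [pmult]
  rw [if_pos ha, h1]
  have : (2 : ℤ) ≤ (negCount L : ℤ) := by exact_mod_cast h2
  nlinarith

lemma step_neg {L L' : List ℤ} (h : RankStep L L') : 1 ≤ negCount L' := by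
  obtain ⟨a, h2, _, ha, hmax, rfl⟩ := h
  rw [negCount_append, negCount_cons, if_pos ha]
  omega

/-- Termination of the rank-reduction process: starting from a list with at least one
strictly negative entry, any sequence of rank-reduction steps has length at most the
puncturing multiplicity of the initial list, every list in the sequence has at least
one negative entry, and if no further step is possible then the final list has exactly
one strictly negative entry. -/
theorem rank_reduction_terminates (L : ℕ → List ℤ) (h0 : 1 ≤ negCount (L 0))
    (n : ℕ) (hstep : ∀ i < n, RankStep (L i) (L (i + 1))) :
    (n : ℤ) ≤ pmult (L 0) ∧
    (∀ i ≤ n, 1 ≤ negCount (L i)) ∧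
    ((∀ L', ¬ RankStep (L n) L') → negCount (L n) = 1) := by
  have key : ∀ i ≤ n, pmult (L i) + i ≤ pmult (L 0) ∧ 1 ≤ negCount (L i) := by
    intro i hi
    induction i with
    | zero => exact ⟨by simp, h0⟩
    | succ k ih =>
      have hk := ih (by omega)
      have hs := hstep k (by omega)
      refine ⟨?_, step_neg hs⟩
      have := step_pmult hs
      push_cast
      push_cast at hk
      linarith [hk.1]
  have hneg : ∀ i ≤ n, 1 ≤ negCount (L i) := fun i hi => (key i hi).2
  refine ⟨?_, hneg, ?_⟩
  · have h1 := (key n le_rfl).1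
    have h2 : (1 : ℤ) ≤ (negCount (L n) : ℤ) := by exact_mod_cast hneg n le_rfl
    have := pmult_ge (L n)
    linarith
  · intro hno
    by_contra hne
    have h2 : 2 ≤ negCount (L n) := by have := hneg n le_rfl; omega
    set F := (L n).filter (fun x => x < 0) with hF
    have hFne : F ≠ [] := by
      intro h
      rw [negCount, ← hF, h] at h2
      simp at h2
    obtain ⟨a, ha⟩ := List.maximum_ne_bot_of_ne_nil hFne |> Option.ne_none_iff_exists'.mp
    have haF : a ∈ F := List.maximum_mem ha
    have haL : a ∈ L n ∧ a < 0 := by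
      rw [hF, List.mem_filter] at haF
      exact ⟨haF.1, by simpa using haF.2⟩
    refine hno ((L n).map (fun x => if x < 0 then x - a else x) ++ [a])
      ⟨a, h2, haL.1, haL.2, ?_, rfl⟩
    intro x hx hx0
    exact List.le_maximum_of_mem (by rw [hF, List.mem_filter]; exact ⟨hx, by simpa using hx0⟩) ha
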